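/- Let n ≥ 2 and f : ZMod n → ℕ with ∑_v f v = n and f not identically 1. Then there exists g : ZMod n → ℕ and d : ZMod n → ℕ with d v ≤ f v for all v, d v ≤ 1 for all v, g v = f v - d v + d (v - 1) for all v, ∑_v g v = n, and |{v : g v = 0}| < |{v : f v = 0}|. -/

import Mathlib

theorem stmt_5 (n : ℕ) [NeZero n] (f : ZMod n → ℕ)
    (hsum : ∑ v, f v = n) (hnd : f ≠ fun _ => 1) :
    ∃ g d : ZMod n → ℕ,
      (∀ v, d v ≤ f v) ∧ (∀ v, d v ≤ 1) ∧
      (∀ v, g v = f v - d v + d (v - 1)) ∧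
      (∑ v, g v = n) ∧
      (Finset.univ.filter fun v => g v = 0).card
        < (Finset.univ.filter fun v => f v = 0).card := by
  classical
  have hcardn : (Finset.univ : Finset (ZMod n)).card = n := by simp [ZMod.card]
  have hone : ∑ _v : ZMod n, (1 : ℕ) = n := by simp [hcardn]
  -- there is a node with at least 2 robots
  have hu : ∃ u, 2 ≤ f u := by
    by_contra hcon
    push_neg at hcon
    have h1 : ∀ v ∈ Finset.univ, f v ≤ 1 := fun v _ => by have := hcon v; omega
    have heq : ∑ v, f v = ∑ _v : ZMod n, 1 := by rw [hsum, hone]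
    have := (Finset.sum_eq_sum_iff_of_le h1).mp heq
    exact hnd (funext fun v => this v (Finset.mem_univ v))
  obtain ⟨u, hu2⟩ := hu
  -- there is a hole
  have hh : ∃ h, f h = 0 := by
    by_contra hcon
    push_neg at hcon
    have hlt : ∑ _v : ZMod n, (1 : ℕ) < ∑ v, f v := by
      refine Finset.sum_lt_sum (fun v _ => ?_) ⟨u, Finset.mem_univ u, by omega⟩
      have := hcon v; omega
    omega
  obtain ⟨h, hh0⟩ := hh
  have hne : h ≠ u := fun e => by rw [e] at hh0; omega
  have ht₀pos : 0 < (h - u).val := by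
    rcases Nat.eq_zero_or_pos (h - u).val with h0 | h0
    · exact absurd (sub_eq_zero.mp ((ZMod.val_eq_zero _).mp h0)) hne
    · exact h0
  have ht₀spec : f (u + (((h - u).val : ℕ) : ZMod n)) = 0 := by
    rw [ZMod.natCast_val, ZMod.cast_id]
    simpa using hh0
  have hP : ∃ t : ℕ, 0 < t ∧ f (u + (t : ZMod n)) = 0 := ⟨(h - u).val, ht₀pos, ht₀spec⟩
  set k := Nat.find hP with hkdef
  obtain ⟨hkpos, hk0⟩ := Nat.find_spec hP
  have hkle : k ≤ (h - u).val := Nat.find_min' hP ⟨ht₀pos, ht₀spec⟩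
  have hkn : k < n := lt_of_le_of_lt hkle (ZMod.val_lt _)
  have hinj : ∀ i j : ℕ, i < n → j < n → (i : ZMod n) = j → i = j := by
    intro i j hi hj e
    have := congrArg ZMod.val e
    rwa [ZMod.val_cast_of_lt hi, ZMod.val_cast_of_lt hj] at this
  set d : ZMod n → ℕ := fun v => if ∃ i, i < k ∧ v = u + (i : ZMod n) then 1 else 0 with hd
  have hd1 : ∀ i, i < k → d (u + (i : ZMod n)) = 1 := by
    intro i hi
    simp only [hd]
    rw [if_pos ⟨i, hi, rfl⟩]
  have hfpos : ∀ i, i < k → 1 ≤ f (u + (i : ZMod n)) := by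
    intro i hi
    rcases Nat.eq_zero_or_pos i with rfl | hipos
    · simpa using (by omega : 1 ≤ f u)
    · by_contra h0
      have : f (u + (i : ZMod n)) = 0 := by omega
      exact absurd (Nat.find_min' hP ⟨hipos, this⟩) (by omega)
  have hdlef : ∀ v, d v ≤ f v := by
    intro v
    simp only [hd]
    split
    · next hc =>
        obtain ⟨i, hik, rfl⟩ := hc
        exact hfpos i hik
    · exact Nat.zero_le _
  have hdle1 : ∀ v, d v ≤ 1 := by
    intro v; simp only [hd]; split <;> omega
  have hd0 : d (u + (k : ZMod n)) = 0 := by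
    simp only [hd]
    rw [if_neg]
    rintro ⟨i, hik, he⟩
    have : (k : ZMod n) = i := add_left_cancel he
    have := hinj k i hkn (lt_trans hik hkn) this
    omega
  set g : ZMod n → ℕ := fun v => f v - d v + d (v - 1) with hg
  -- sum preserved
  have hsd : ∑ v, d (v - 1) = ∑ v, d v :=
    Fintype.sum_equiv (Equiv.subRight (1 : ZMod n)) _ _ (fun v => rfl)
  have hsumg : ∑ v, g v = n := by
    have e1 : ∑ v, g v = ∑ v, (f v - d v) + ∑ v, d (v - 1) := by
      simp only [hg]; exact Finset.sum_add_distrib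
    rw [e1, hsd, ← Finset.sum_add_distrib]
    have : ∀ v ∈ Finset.univ, f v - d v + d v = f v :=
      fun v _ => Nat.sub_add_cancel (hdlef v)
    rw [Finset.sum_congr rfl this, hsum]
  -- subset of holes
  have hsub : ∀ v, g v = 0 → f v = 0 := by
    intro v hgv
    simp only [hg] at hgv
    have h1 : f v - d v = 0 := by omega
    have h2 : d (v - 1) = 0 := by omega
    by_contra hf0
    have hfv1 : f v = 1 := by have := hdle1 v; omega
    have hdv1 : d v = 1 := by have := hdlef v; omega
    have hc : ∃ i, i < k ∧ v = u + (i : ZMod n) := by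
      by_contra hnc
      simp only [hd] at hdv1
      rw [if_neg hnc] at hdv1
      omega
    obtain ⟨i, hik, rfl⟩ := hc
    rcases Nat.eq_zero_or_pos i with rfl | hipos
    · simp at hfv1; omega
    · have hv1 : u + (i : ZMod n) - 1 = u + (((i - 1 : ℕ)) : ZMod n) := by
        rw [Nat.cast_sub hipos]
        push_cast
        ring
      rw [hv1, hd1 (i - 1) (by omega)] at h2
      omega
  -- the hole u + k is filled
  have hgv₀ : g (u + (k : ZMod n)) = 1 := by
    have hv1 : u + (k : ZMod n) - 1 = u + (((k - 1 : ℕ)) : ZMod n) := by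
      rw [Nat.cast_sub hkpos]
      push_cast
      ring
    simp only [hg]
    rw [hk0, hd0, hv1, hd1 (k - 1) (by omega)]
  refine ⟨g, d, hdlef, hdle1, fun v => rfl, hsumg, ?_⟩
  apply Finset.card_lt_card
  rw [Finset.ssubset_iff_of_subset]
  · refine ⟨u + (k : ZMod n), ?_, ?_⟩
    · simp [hkdef, hk0]
    · simp [hgv₀]
  · intro v hv
    simp only [Finset.mem_filter, Finset.mem_univ, true_and] at hv ⊢
    exact hsub v hv
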